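/- Let X be a closed set of ordinals and let h : X → Ord be strictly order-preserving. The following are equivalent: (1) h is an embedding, i.e. for all α, β ∈ X and ξ < ρ, f_ξ(α) = β iff f_ξ(h(α)) = h(β); (2) for all ordinals σ and ξ, if σ is divisible by ρ, ξ < ρ and σ + ξ ∈ X, then h(σ + ξ) = h(σ) + ξ and h(σ) is divisible by ρ; (3) the range of h is closed and rem(h(α)) = rem(α) for all α ∈ X. -/

import Mathlib

open Ordinal Set

/-- `ρ` is additively indecomposable: nonzero and closed under addition. -/
def AddIndec (ρ : Ordinal) : Prop :=
  ρ ≠ 0 ∧ ∀ ξ < ρ, ∀ η < ρ, ξ + η < ρ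

/-- `σ` is divisible by `ρ`, i.e. of the form `ρ·ζ`. -/
def DivBy (ρ σ : Ordinal) : Prop := ∃ ζ : Ordinal, σ = ρ * ζ

/-- The function `f_ξ` of the structure `R^ρ`. -/
noncomputable def fApp (ρ ξ α : Ordinal) : Ordinal :=
  if α % ρ = 0 then α + ξ else ρ * (α / ρ)

/-- A set of ordinals is closed (with respect to `R^ρ`). -/
def RClosed (ρ : Ordinal) (X : Set Ordinal) : Prop :=
  ∀ σ ξ : Ordinal, DivBy ρ σ → ξ < ρ → σ + ξ ∈ X → σ ∈ X

/-- `h` is an embedding of `X` (as a substructure of `R^ρ`) into `R^ρ`. -/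
def IsEmbed (ρ : Ordinal) (X : Set Ordinal) (h : Ordinal → Ordinal) : Prop :=
  (∀ α ∈ X, ∀ β ∈ X, α < β → h α < h β) ∧
  (∀ α ∈ X, ∀ β ∈ X, ∀ ξ, ξ < ρ → (fApp ρ ξ α = β ↔ fApp ρ ξ (h α) = h β))

/-- `Y` is a covering of `Z` (relative to relations `le1`, `le2`). -/
def IsCovering (ρ : Ordinal) (le1 le2 : Ordinal → Ordinal → Prop)
    (Z Y : Set Ordinal) : Prop :=
  ∃ h : Ordinal → Ordinal, IsEmbed ρ Z h ∧
    (∀ σ ∈ Z, ∀ τ ∈ Z, (le1 σ τ → le1 (h σ) (h τ)) ∧ (le2 σ τ → le2 (h σ) (h τ))) ∧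
    h '' Z = Y

/-- The `i`-th element of a finite set of ordinals, in increasing order. -/
noncomputable def nth (Y : Finset Ordinal) (i : ℕ) : Ordinal :=
  (Y.sort (· ≤ ·)).getD i 0

/-- There are cofinally many finite sets `Ỹ` below `α` with property `P`. -/
def Cofinally (α : Ordinal) (P : Finset Ordinal → Prop) : Prop :=
  ∀ α' < α, ∃ Yt : Finset Ordinal, (∀ y ∈ Yt, α' < y ∧ y < α) ∧ P Yt

/-- The defining condition for `α ≤₁ β`. -/
def Le1Def (ρ : Ordinal) (le1 le2 : Ordinal → Ordinal → Prop) (α β : Ordinal) : Prop :=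
  α ≤ β ∧
  ∀ X Y : Finset Ordinal, (∀ x ∈ X, x < α) → (∀ y ∈ Y, α ≤ y ∧ y < β) →
    RClosed ρ (↑(X ∪ Y) : Set Ordinal) →
    ∃ Yt : Finset Ordinal, (∀ y ∈ Yt, y < α) ∧ (∀ x ∈ X, ∀ y ∈ Yt, x < y) ∧
      IsCovering ρ le1 le2 (↑(X ∪ Y) : Set Ordinal) (↑(X ∪ Yt) : Set Ordinal)

/-- The defining condition for `α ≤₂ β`. -/
def Le2Def (ρ : Ordinal) (le1 le2 : Ordinal → Ordinal → Prop) (α β : Ordinal) : Prop :=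
  α ≤ β ∧
  (∀ X Y : Finset Ordinal, (∀ x ∈ X, x < α) → (∀ y ∈ Y, y < α) →
    RClosed ρ (↑X : Set Ordinal) → RClosed ρ (↑Y : Set Ordinal) →
    (∀ x ∈ X, ∀ y ∈ Y, x < y) →
    Cofinally α (fun Yt => IsCovering ρ le1 le2 (↑(X ∪ Y) : Set Ordinal) (↑(X ∪ Yt) : Set Ordinal)) →
    Cofinally β (fun Yt => IsCovering ρ le1 le2 (↑(X ∪ Y) : Set Ordinal) (↑(X ∪ Yt) : Set Ordinal))) ∧
  (∀ X Y : Finset Ordinal, (∀ x ∈ X, x < α) → (∀ y ∈ Y, α ≤ y ∧ y < β) →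
    RClosed ρ (↑(X ∪ Y) : Set Ordinal) →
    ∃ Yt : Finset Ordinal, (∀ y ∈ Yt, y < α) ∧ (∀ x ∈ X, ∀ y ∈ Yt, x < y) ∧
      IsCovering ρ le1 le2 (↑(X ∪ Y) : Set Ordinal) (↑(X ∪ Yt) : Set Ordinal) ∧
      ∀ i : ℕ, i < Y.card → le1 (nth Y i) β → le1 (nth Yt i) α)

/-- `le1`, `le2` satisfy the recursive definitions of `≤₁` and `≤₂` of `R₂^ρ`. -/
def R2System (ρ : Ordinal) (le1 le2 : Ordinal → Ordinal → Prop) : Prop :=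
  (∀ α β, le1 α β ↔ Le1Def ρ le1 le2 α β) ∧
  (∀ α β, le2 α β ↔ Le2Def ρ le1 le2 α β)

/-- Isomorphism of two classes of ordinals as substructures of `R₂^ρ`. -/
def OrdIso (ρ : Ordinal) (le1 le2 : Ordinal → Ordinal → Prop) (A B : Set Ordinal) : Prop :=
  ∃ g : Ordinal → Ordinal, Set.BijOn g A B ∧
    (∀ σ ∈ A, ∀ τ ∈ A, (σ < τ ↔ g σ < g τ)) ∧
    (∀ σ ∈ A, ∀ τ ∈ A, ∀ ξ, ξ < ρ → (fApp ρ ξ σ = τ ↔ fApp ρ ξ (g σ) = g τ)) ∧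
    (∀ σ ∈ A, ∀ τ ∈ A, (le1 σ τ ↔ le1 (g σ) (g τ)) ∧ (le2 σ τ ↔ le2 (g σ) (g τ)))

/-- `κ` is `≤₁`-minimal. -/
def Min1 (le1 : Ordinal → Ordinal → Prop) (κ : Ordinal) : Prop :=
  ∀ ξ < κ, ¬ le1 ξ κ

/-- `(dom, f)` is the increasing enumeration of the class `S` of ordinals:
`dom` is a downward-closed class of indices and `f` restricted to `dom` is the
order isomorphism onto `S`. -/
def Enumerates (S : Set Ordinal) (dom : Ordinal → Prop) (f : Ordinal → Ordinal) : Prop :=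
  (∀ a b : Ordinal, dom a → b < a → dom b) ∧
  (∀ a b : Ordinal, dom b → a < b → f a < f b) ∧
  (∀ a : Ordinal, dom a → f a ∈ S) ∧
  (∀ x ∈ S, ∃ a, dom a ∧ f a = x)

/-- `l` is a limit point of the class `C` of ordinals. -/
def LimPt (C : Set Ordinal) (l : Ordinal) : Prop :=
  l ≠ 0 ∧ ∀ γ < l, ∃ δ ∈ C, γ < δ ∧ δ < l

/-- The class `C` of ordinals is topologically closed. -/
def TopClosed (C : Set Ordinal) : Prop := ∀ l, LimPt C l → l ∈ C

/-- The class `C` of ordinals is an interval. -/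
def IsInterval (C : Set Ordinal) : Prop :=
  ∀ σ τ υ : Ordinal, σ ∈ C → υ ∈ C → σ ≤ τ → τ ≤ υ → τ ∈ C

open Classical in
/-- The closure `J̄_ξ` of the `ξ`-th component of `I_α` with respect to `≤₂`,
given the enumeration `(dom₂, ν)` of the `≤₂`-minimal multiples of `κ_α` in `I_α`. -/
noncomputable def Jbar (le1 : Ordinal → Ordinal → Prop) (κα : Ordinal)
    (dom₂ : Ordinal → Prop) (ν : Ordinal → Ordinal) (ξ : Ordinal) : Set Ordinal :=
  if dom₂ (ξ + 1) then Set.Icc (ν ξ) (ν (ξ + 1))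
  else {δ | le1 κα δ} ∩ Set.Ici (ν ξ)

section MyAux
variable {ρ : Ordinal}

lemma myAux_mod (hρ : ρ ≠ 0) (ζ : Ordinal) {ε : Ordinal} (hε : ε < ρ) :
    (ρ * ζ + ε) % ρ = ε := by
  rw [Ordinal.mod_def, Ordinal.mul_add_div _ hρ, Ordinal.div_eq_zero_of_lt hε, add_zero,
    Ordinal.add_sub_cancel]

lemma myAux_div (hρ : ρ ≠ 0) (ζ : Ordinal) {ε : Ordinal} (hε : ε < ρ) :
    (ρ * ζ + ε) / ρ = ζ := by
  rw [Ordinal.mul_add_div _ hρ, Ordinal.div_eq_zero_of_lt hε, add_zero]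

lemma myDivBy_iff (hρ : ρ ≠ 0) {σ : Ordinal} : DivBy ρ σ ↔ σ % ρ = 0 := by
  constructor
  · rintro ⟨ζ, rfl⟩
    simpa using myAux_mod hρ ζ (Ordinal.pos_iff_ne_zero.2 hρ)
  · intro h0
    refine ⟨σ / ρ, ?_⟩
    conv_lhs => rw [← Ordinal.div_add_mod σ ρ]
    rw [h0, add_zero]

lemma mySelf_of_mod_zero {σ : Ordinal} (h0 : σ % ρ = 0) : ρ * (σ / ρ) = σ := by
  conv_rhs => rw [← Ordinal.div_add_mod σ ρ]
  rw [h0, add_zero]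

lemma myMult_gap (hρ : ρ ≠ 0) {ζ ζ' : Ordinal} (hlt : ρ * ζ < ρ * ζ') :
    ρ * ζ + ρ ≤ ρ * ζ' := by
  have h1 : ζ < ζ' := (mul_lt_mul_iff_right₀ (pos_iff_ne_zero.2 hρ)).1 hlt
  calc ρ * ζ + ρ = ρ * (ζ + 1) := by rw [mul_add_one]
    _ ≤ ρ * ζ' := by
        apply mul_le_mul_right
        rw [Ordinal.add_one_eq_succ]
        exact Order.succ_le_of_lt h1

end MyAux

lemma myStep12 (ρ : Ordinal) (hρ : AddIndec ρ) (X : Set Ordinal) (hX : RClosed ρ X)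
    (h : Ordinal → Ordinal)
    (h1 : ∀ a ∈ X, ∀ b ∈ X, ∀ ξ, ξ < ρ → (fApp ρ ξ a = b ↔ fApp ρ ξ (h a) = h b)) :
    ∀ σ ξ : Ordinal, DivBy ρ σ → ξ < ρ → σ + ξ ∈ X →
      h (σ + ξ) = h σ + ξ ∧ DivBy ρ (h σ) := by
  obtain ⟨hρ0, -⟩ := hρ
  have hρpos : (0:Ordinal) < ρ := pos_iff_ne_zero.2 hρ0
  intro σ ξ hσ hξ hmem
  have hσX : σ ∈ X := hX σ ξ hσ hξ hmem
  have hσ0 : σ % ρ = 0 := (myDivBy_iff hρ0).1 hσ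
  have e0 : fApp ρ 0 σ = σ := by rw [fApp, if_pos hσ0, add_zero]
  have e1 : fApp ρ 0 (h σ) = h σ := (h1 σ hσX σ hσX 0 hρpos).1 e0
  have hdiv : h σ % ρ = 0 := by
    by_contra hc
    rw [fApp, if_neg hc] at e1
    exact hc (e1 ▸ (myDivBy_iff hρ0).1 ⟨_, rfl⟩)
  refine ⟨?_, (myDivBy_iff hρ0).2 hdiv⟩
  have e2 : fApp ρ ξ σ = σ + ξ := by rw [fApp, if_pos hσ0]
  have e3 : fApp ρ ξ (h σ) = h (σ + ξ) := (h1 σ hσX (σ + ξ) hmem ξ hξ).1 e2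
  rw [fApp, if_pos hdiv] at e3
  exact e3.symm

lemma myStep23 (ρ : Ordinal) (hρ : AddIndec ρ) (X : Set Ordinal) (hX : RClosed ρ X)
    (h : Ordinal → Ordinal)
    (h2 : ∀ σ ξ : Ordinal, DivBy ρ σ → ξ < ρ → σ + ξ ∈ X →
      h (σ + ξ) = h σ + ξ ∧ DivBy ρ (h σ)) :
    RClosed ρ (h '' X) ∧ ∀ a ∈ X, h a % ρ = a % ρ := by
  obtain ⟨hρ0, -⟩ := hρ
  have key : ∀ a ∈ X, h a = h (ρ * (a / ρ)) + a % ρ ∧ DivBy ρ (h (ρ * (a / ρ))) := by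
    intro a haX
    have hε : a % ρ < ρ := Ordinal.mod_lt a hρ0
    have ha : ρ * (a / ρ) + a % ρ = a := Ordinal.div_add_mod a ρ
    have := h2 (ρ * (a / ρ)) (a % ρ) ⟨_, rfl⟩ hε (by rw [ha]; exact haX)
    rwa [ha] at this
  constructor
  · rintro τ ξ hτ hξ ⟨a, haX, hae⟩
    obtain ⟨hdec, ζ', hζ'⟩ := key a haX
    have hε : a % ρ < ρ := Ordinal.mod_lt a hρ0
    obtain ⟨ζ, rfl⟩ := hτ
    have heq : ρ * ζ + ξ = ρ * ζ' + a % ρ := by rw [← hae, hdec, hζ']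
    have hmod : ξ = a % ρ := by
      have := congrArg (· % ρ) heq
      simpa [myAux_mod hρ0 ζ hξ, myAux_mod hρ0 ζ' hε] using this
    have hdivq : ζ = ζ' := by
      have := congrArg (· / ρ) heq
      simpa [myAux_div hρ0 ζ hξ, myAux_div hρ0 ζ' hε] using this
    have hσX : ρ * (a / ρ) ∈ X := by
      refine hX _ (a % ρ) ⟨_, rfl⟩ hε ?_
      rw [Ordinal.div_add_mod]; exact haX
    exact ⟨ρ * (a / ρ), hσX, by rw [hζ', hdivq]⟩
  · intro a haX
    obtain ⟨hdec, ζ', hζ'⟩ := key a haX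
    rw [hdec, hζ', myAux_mod hρ0 ζ' (Ordinal.mod_lt a hρ0)]

lemma myStep31 (ρ : Ordinal) (hρ : AddIndec ρ) (X : Set Ordinal) (hX : RClosed ρ X)
    (h : Ordinal → Ordinal) (hmono : ∀ a ∈ X, ∀ b ∈ X, a < b → h a < h b)
    (hcl : RClosed ρ (h '' X)) (hrem : ∀ a ∈ X, h a % ρ = a % ρ) :
    ∀ a ∈ X, ∀ b ∈ X, ∀ ξ, ξ < ρ → (fApp ρ ξ a = b ↔ fApp ρ ξ (h a) = h b) := by
  obtain ⟨hρ0, -⟩ := hρ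
  have hinj : ∀ a ∈ X, ∀ b ∈ X, h a = h b → a = b := by
    intro a haX b hbX hab
    rcases lt_trichotomy a b with hlt | heq | hgt
    · exact absurd hab (ne_of_lt (hmono a haX b hbX hlt))
    · exact heq
    · exact absurd hab.symm (ne_of_lt (hmono b hbX a haX hgt))
  have hfloorX : ∀ a ∈ X, ρ * (a / ρ) ∈ X := by
    intro a haX
    refine hX _ (a % ρ) ⟨_, rfl⟩ (Ordinal.mod_lt a hρ0) ?_
    rw [Ordinal.div_add_mod]; exact haX
  -- the floor lemma
  have hfloor : ∀ a ∈ X, h (ρ * (a / ρ)) = ρ * (h a / ρ) := by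
    intro a haX
    have hε : a % ρ < ρ := Ordinal.mod_lt a hρ0
    have hσX : ρ * (a / ρ) ∈ X := hfloorX a haX
    have hha : ρ * (h a / ρ) + a % ρ = h a := by
      conv_rhs => rw [← Ordinal.div_add_mod (h a) ρ]
      rw [hrem a haX]
    -- ρ * (h a / ρ) is in the range
    have hτmem : ρ * (h a / ρ) ∈ h '' X := by
      refine hcl _ (a % ρ) ⟨_, rfl⟩ hε ?_
      rw [hha]; exact ⟨a, haX, rfl⟩
    obtain ⟨c, hcX, hceq⟩ := hτmem
    by_cases hε0 : a % ρ = 0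
    · -- then a is divisible: a = ρ * (a / ρ) and h a = ρ * (h a / ρ)
      rw [mySelf_of_mod_zero hε0]
      rw [hε0, add_zero] at hha
      exact hha.symm
    · -- a % ρ ≠ 0
      have hc0 : c % ρ = 0 := by
        rw [← hrem c hcX, hceq]
        exact (myDivBy_iff hρ0).1 ⟨_, rfl⟩
      have hσlt : ρ * (a / ρ) < a := by
        conv_rhs => rw [← Ordinal.div_add_mod a ρ]
        exact lt_add_of_pos_right _ (pos_iff_ne_zero.2 hε0)
      rcases lt_trichotomy c (ρ * (a / ρ)) with hlt | heq | hgt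
      · exfalso
        have h1 : h c < h (ρ * (a / ρ)) := hmono c hcX _ hσX hlt
        have h2 : h (ρ * (a / ρ)) < h a := hmono _ hσX a haX hσlt
        -- h σ is divisible; h σ and τ = h c are distinct multiples
        have hσdiv : h (ρ * (a / ρ)) % ρ = 0 := by
          rw [hrem _ hσX]
          exact (myDivBy_iff hρ0).1 ⟨_, rfl⟩
        have hgap : ρ * (h a / ρ) + ρ ≤ h (ρ * (a / ρ)) := by
          have := myMult_gap hρ0 (ζ := h a / ρ) (ζ' := h (ρ * (a / ρ)) / ρ) ?_
          · rwa [mySelf_of_mod_zero hσdiv] at this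
          · rw [mySelf_of_mod_zero hσdiv, ← hceq]; exact h1
        have : h (ρ * (a / ρ)) < ρ * (h a / ρ) + ρ := by
          calc h (ρ * (a / ρ)) < h a := h2
            _ = ρ * (h a / ρ) + a % ρ := hha.symm
            _ < ρ * (h a / ρ) + ρ := (add_lt_add_iff_left _).2 (Ordinal.mod_lt a hρ0)
        exact absurd hgap (not_le_of_gt this)
      · rw [← heq, hceq]
      · exfalso
        -- σ < c, both divisible, so a = σ + ε < σ + ρ ≤ c
        have hgap : ρ * (a / ρ) + ρ ≤ c := by
          have := myMult_gap hρ0 (ζ := a / ρ) (ζ' := c / ρ) ?_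
          · rwa [mySelf_of_mod_zero hc0] at this
          · rw [mySelf_of_mod_zero hc0]; exact hgt
        have halt : a < c := by
          calc a = ρ * (a / ρ) + a % ρ := (Ordinal.div_add_mod a ρ).symm
            _ < ρ * (a / ρ) + ρ := (add_lt_add_iff_left _).2 (Ordinal.mod_lt a hρ0)
            _ ≤ c := hgap
        have h1 : h a < h c := hmono a haX c hcX halt
        rw [hceq] at h1
        have h2 : ρ * (h a / ρ) ≤ h a := Ordinal.mul_div_le _ _
        exact absurd h2 (not_le_of_gt h1)
  -- main argument
  intro a haX b hbX ξ hξ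
  have hεa : a % ρ < ρ := Ordinal.mod_lt a hρ0
  have hha : ρ * (h a / ρ) + a % ρ = h a := by
    conv_rhs => rw [← Ordinal.div_add_mod (h a) ρ]
    rw [hrem a haX]
  by_cases hε0 : a % ρ = 0
  · obtain ⟨ζ, rfl⟩ : ∃ ζ, a = ρ * ζ := (myDivBy_iff hρ0).2 hε0
    have hhadiv : h (ρ * ζ) % ρ = 0 := by rw [hrem _ haX]; exact hε0
    have hhadiv' : ρ * (h (ρ * ζ) / ρ) = h (ρ * ζ) := mySelf_of_mod_zero hhadiv
    rw [fApp, fApp, if_pos hε0, if_pos hhadiv]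
    have hzdiv : ∀ ε < ρ, (ρ * ζ + ε) / ρ = ζ := fun ε hε => myAux_div hρ0 ζ hε
    constructor
    · rintro rfl
      have hfl := hfloor (ρ * ζ + ξ) hbX
      rw [hzdiv ξ hξ] at hfl
      have hhb : ρ * (h (ρ * ζ + ξ) / ρ) + (ρ * ζ + ξ) % ρ = h (ρ * ζ + ξ) := by
        conv_rhs => rw [← Ordinal.div_add_mod (h (ρ * ζ + ξ)) ρ]
        rw [hrem _ hbX]
      rw [myAux_mod hρ0 ζ hξ, ← hfl] at hhb
      exact hhb
    · intro he
      have hbmod : b % ρ = ξ := by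
        rw [← hrem b hbX, ← he, ← hhadiv', myAux_mod hρ0 _ hξ]
      have hbdiv : ρ * (h b / ρ) = h (ρ * ζ) := by
        rw [← he, ← hhadiv']
        rw [myAux_div hρ0 _ hξ]
      have hfl := hfloor b hbX
      rw [hbdiv] at hfl
      have hbf : ρ * (b / ρ) = ρ * ζ := hinj _ (hfloorX b hbX) _ haX hfl
      calc ρ * ζ + ξ = ρ * (b / ρ) + b % ρ := by rw [hbf, hbmod]
        _ = b := Ordinal.div_add_mod b ρ
  · have hhane : h a % ρ ≠ 0 := by rw [hrem a haX]; exact hε0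
    rw [fApp, fApp, if_neg hε0, if_neg hhane, ← hfloor a haX]
    constructor
    · rintro rfl; rfl
    · intro he
      exact hinj _ (hfloorX a haX) b hbX he

theorem embedding_characterization
    (ρ : Ordinal) (hρ : AddIndec ρ)
    (X : Set Ordinal) (hX : RClosed ρ X)
    (h : Ordinal → Ordinal) (hmono : ∀ a ∈ X, ∀ b ∈ X, a < b → h a < h b) :
    ((∀ a ∈ X, ∀ b ∈ X, ∀ ξ, ξ < ρ → (fApp ρ ξ a = b ↔ fApp ρ ξ (h a) = h b)) ↔
      (∀ σ ξ : Ordinal, DivBy ρ σ → ξ < ρ → σ + ξ ∈ X →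
        h (σ + ξ) = h σ + ξ ∧ DivBy ρ (h σ))) ∧
    ((∀ a ∈ X, ∀ b ∈ X, ∀ ξ, ξ < ρ → (fApp ρ ξ a = b ↔ fApp ρ ξ (h a) = h b)) ↔
      (RClosed ρ (h '' X) ∧ ∀ a ∈ X, h a % ρ = a % ρ)) := by
  refine ⟨⟨fun h1 => myStep12 ρ hρ X hX h h1, fun h2 => ?_⟩,
    ⟨fun h1 => myStep23 ρ hρ X hX h (myStep12 ρ hρ X hX h h1), fun h3 => ?_⟩⟩
  · obtain ⟨hcl, hrem⟩ := myStep23 ρ hρ X hX h h2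
    exact myStep31 ρ hρ X hX h hmono hcl hrem
  · exact myStep31 ρ hρ X hX h hmono h3.1 h3.2
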